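/- Let P be a Pellian polynomial of odd degree d, and let a ∈ [0,1] satisfy a ≤ sin(π/(2d)). Then |P(a)| ≤ |T_d(a)|. -/

import Mathlib

/-- A polynomial over `ℂ` is an even function. -/
def IsEvenPoly (P : Polynomial ℂ) : Prop := ∀ x : ℂ, P.eval (-x) = P.eval x

/-- A polynomial over `ℂ` is an odd function. -/
def IsOddPoly (P : Polynomial ℂ) : Prop := ∀ x : ℂ, P.eval (-x) = -P.eval x

/-- `P, Q ∈ ℂ[x]` form a Pell pair: fixed and opposite parity, and
`|P(x)|² + (1 - x²)|Q(x)|² = 1` on `[-1,1]`. -/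
def PellPair (P Q : Polynomial ℂ) : Prop :=
  ((IsEvenPoly P ∧ IsOddPoly Q) ∨ (IsOddPoly P ∧ IsEvenPoly Q)) ∧
    ∀ x : ℝ, x ∈ Set.Icc (-1 : ℝ) 1 →
      ‖P.eval (x : ℂ)‖ ^ 2 + (1 - x ^ 2) * ‖Q.eval (x : ℂ)‖ ^ 2 = 1

/-- A polynomial is Pellian if it is the first member of some Pell pair. -/
def Pellian (P : Polynomial ℂ) : Prop := ∃ Q : Polynomial ℂ, PellPair P Q

open Polynomial Complex

local notation "conj'" => starRingEnd ℂ

lemma evalc (P : Polynomial ℂ) (z : ℂ) :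
    (P.map conj').eval z = conj' (P.eval (conj' z)) := by
  rw [eval_map, show z = conj' (conj' z) by simp, Polynomial.eval₂_at_apply]
  simp

lemma comp_negX_coeff (P : Polynomial ℂ) (n : ℕ) :
    (P.comp (-X)).coeff n = (-1)^n * P.coeff n := by
  induction P using Polynomial.induction_on' with
  | add p q hp hq => simp [add_comp, hp, hq, mul_add]
  | monomial m a =>
    rw [← C_mul_X_pow_eq_monomial, mul_comp, C_comp, pow_comp, X_comp]
    rw [show (-X : Polynomial ℂ)^m = C ((-1)^m) * X^m by
      rw [neg_pow]; simp [map_pow]]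
    rw [← mul_assoc, ← map_mul]
    simp only [coeff_C_mul, coeff_X_pow, coeff_monomial]
    split_ifs with h
    · subst h; ring
    · simp

lemma even_coeff {P : Polynomial ℂ} (h : IsEvenPoly P) {n : ℕ} (hn : Odd n) :
    P.coeff n = 0 := by
  have hcomp : P.comp (-X) = P := by
    apply Polynomial.funext
    intro x
    rw [eval_comp]
    simpa using h x
  have := congrArg (fun p => Polynomial.coeff p n) hcomp
  simp only [comp_negX_coeff] at this
  rw [hn.neg_one_pow] at this
  linear_combination -this / 2

lemma odd_coeff {P : Polynomial ℂ} (h : IsOddPoly P) {n : ℕ} (hn : Even n) :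
    P.coeff n = 0 := by
  have hcomp : P.comp (-X) = -P := by
    apply Polynomial.funext
    intro x
    rw [eval_comp]
    simpa using h x
  have := congrArg (fun p => Polynomial.coeff p n) hcomp
  simp only [comp_negX_coeff, coeff_neg] at this
  rw [hn.neg_one_pow] at this
  linear_combination this / 2

lemma pell_poly {P Q : Polynomial ℂ} (h : PellPair P Q) :
    P * P.map conj' + (1 - X ^ 2) * (Q * Q.map conj') = 1 := by
  rw [← sub_eq_zero]
  apply Polynomial.eq_zero_of_infinite_isRoot
  apply Set.Infinite.mono (s := (fun t : ℝ => (t : ℂ)) '' Set.Icc (-1) 1)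
  · rintro _ ⟨x, hx, rfl⟩
    have hx' := h.2 x hx
    rw [Complex.sq_norm, Complex.sq_norm] at hx'
    simp only [Set.mem_setOf_eq, IsRoot, eval_sub, eval_add, eval_mul, eval_one, eval_pow,
      eval_X, evalc, Complex.conj_ofReal]
    rw [Complex.mul_conj, Complex.mul_conj]
    have := congrArg (fun t : ℝ => (t : ℂ)) hx'
    push_cast at this ⊢
    linear_combination this
  · exact (Set.Icc_infinite (by norm_num : (-1:ℝ) < 1)).image
      (Set.injOn_of_injective Complex.ofReal_injective)

lemma pell_degree {P Q : Polynomial ℂ} (h : PellPair P Q) (hd : 1 ≤ P.natDegree) :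
    Q ≠ 0 ∧ Q.natDegree + 1 = P.natDegree ∧
      Q.leadingCoeff * conj' Q.leadingCoeff = P.leadingCoeff * conj' P.leadingCoeff := by
  have hId := pell_poly h
  have hP0 : P ≠ 0 := by
    rintro rfl; simp at hd
  have hPc0 : P.map conj' ≠ 0 := by
    simpa using (Polynomial.map_ne_zero_iff (starRingEnd ℂ).injective).2 hP0
  have hA : (P * P.map conj').natDegree = 2 * P.natDegree := by
    rw [natDegree_mul hP0 hPc0, Polynomial.natDegree_map]; ring
  have hAl : (P * P.map conj').leadingCoeff = P.leadingCoeff * conj' P.leadingCoeff := by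
    rw [leadingCoeff_mul, Polynomial.leadingCoeff_map]
  have hQ0 : Q ≠ 0 := by
    rintro rfl
    simp only [Polynomial.map_zero, mul_zero, zero_mul, add_zero] at hId
    have := congrArg Polynomial.natDegree hId
    rw [hA, natDegree_one] at this
    omega
  have hQc0 : Q.map conj' ≠ 0 := by
    simpa using (Polynomial.map_ne_zero_iff (starRingEnd ℂ).injective).2 hQ0
  have h2 : ((1 : Polynomial ℂ) - X ^ 2) = -(X ^ 2 - C 1) := by rw [map_one]; ring
  have hq0 : (1 - X ^ 2 : Polynomial ℂ) ≠ 0 := by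
    rw [h2, neg_ne_zero]
    exact X_pow_sub_C_ne_zero (by norm_num) 1
  have hqd : (1 - X ^ 2 : Polynomial ℂ).natDegree = 2 := by
    rw [h2, natDegree_neg, natDegree_X_pow_sub_C]
  have hql : (1 - X ^ 2 : Polynomial ℂ).leadingCoeff = -1 := by
    rw [h2, leadingCoeff_neg, (monic_X_pow_sub_C (1:ℂ) (by norm_num : 2 ≠ 0)).leadingCoeff]
  have hB : ((1 - X ^ 2) * (Q * Q.map conj')).natDegree = 2 + 2 * Q.natDegree := by
    rw [natDegree_mul hq0 (mul_ne_zero hQ0 hQc0), hqd,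
      natDegree_mul hQ0 hQc0, Polynomial.natDegree_map]; ring
  have hBl : ((1 - X ^ 2) * (Q * Q.map conj')).leadingCoeff
      = -(Q.leadingCoeff * conj' Q.leadingCoeff) := by
    rw [leadingCoeff_mul, hql, leadingCoeff_mul, Polynomial.leadingCoeff_map]; ring
  have hAlne : P.leadingCoeff * conj' P.leadingCoeff ≠ 0 :=
    mul_ne_zero (leadingCoeff_ne_zero.2 hP0) (star_ne_zero.2 (leadingCoeff_ne_zero.2 hP0))
  have hBlne : Q.leadingCoeff * conj' Q.leadingCoeff ≠ 0 :=
    mul_ne_zero (leadingCoeff_ne_zero.2 hQ0) (star_ne_zero.2 (leadingCoeff_ne_zero.2 hQ0))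
  have hcoeff : ∀ N : ℕ, N ≠ 0 →
      (P * P.map conj').coeff N + ((1 - X ^ 2) * (Q * Q.map conj')).coeff N = 0 := by
    intro N hN
    have := congrArg (fun p => Polynomial.coeff p N) hId
    simpa [coeff_one, hN] using this
  have hAtop : (P * P.map conj').coeff (2 * P.natDegree)
      = P.leadingCoeff * conj' P.leadingCoeff := by
    rw [← hA, coeff_natDegree, hAl]
  have hBtop : ((1 - X ^ 2) * (Q * Q.map conj')).coeff (2 + 2 * Q.natDegree)
      = -(Q.leadingCoeff * conj' Q.leadingCoeff) := by
    rw [← hB, coeff_natDegree, hBl]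
  have hc1 := hcoeff (2 * P.natDegree) (by omega)
  rw [hAtop] at hc1
  have hle1 : 2 * P.natDegree ≤ 2 + 2 * Q.natDegree := by
    rw [← hB]
    apply le_natDegree_of_ne_zero
    intro hz
    rw [hz, add_zero] at hc1
    exact hAlne hc1
  have hc2 := hcoeff (2 + 2 * Q.natDegree) (by omega)
  rw [hBtop] at hc2
  have hle2 : 2 + 2 * Q.natDegree ≤ 2 * P.natDegree := by
    rw [← hA]
    apply le_natDegree_of_ne_zero
    intro hz
    rw [hz, zero_add, neg_eq_zero] at hc2
    exact hBlne hc2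
  have heq : 2 + 2 * Q.natDegree = 2 * P.natDegree := by omega
  refine ⟨hQ0, by omega, ?_⟩
  rw [heq, hAtop] at hc2
  linear_combination -hc2

lemma scalar_pell (x : ℝ) (z1 z2 ω : ℂ) (hω : Complex.normSq ω = 1) :
    Complex.normSq ((x:ℂ) * z1 + (1 - (x:ℂ)^2) * (ω * conj' z2))
      + (1 - x^2) * Complex.normSq ((x:ℂ) * z2 - ω * conj' z1)
    = Complex.normSq z1 + (1 - x^2) * Complex.normSq z2 := by
  have h : ω.re * ω.re + ω.im * ω.im = 1 := hω
  simp only [Complex.normSq_apply, Complex.add_re, Complex.add_im, Complex.sub_re,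
    Complex.sub_im, Complex.mul_re, Complex.mul_im, Complex.conj_re, Complex.conj_im,
    Complex.ofReal_re, Complex.ofReal_im, Complex.one_re, Complex.one_im, pow_two,
    Complex.mul_im, Complex.mul_re]
  linear_combination ((z1.re^2 + z1.im^2) * (1 - x^2)
    + (z2.re^2 + z2.im^2) * (x^4 - 2*x^2 + 1)) * h

lemma trig_key {s c S C q r : ℝ} (hs : 0 ≤ s) (hc : 0 ≤ c) (hS : 0 ≤ S) (hC : 0 ≤ C)
    (hr : 0 ≤ r) (hq : 0 ≤ q) (hrq : r^2 + q^2 = 1) (hSC : S^2 + C^2 = 1)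
    (hqS : q ≤ S) (hsc : s * S ≤ c * C) : s * r + c * q ≤ s * C + c * S := by
  rcases le_or_gt r C with hrC | hrC
  · have h1 : s * r ≤ s * C := mul_le_mul_of_nonneg_left hrC hs
    have h2 : c * q ≤ c * S := mul_le_mul_of_nonneg_left hqS hc
    linarith
  · have hpos : 0 < r + C := by linarith
    have e : (r - C) * (r + C) = (S - q) * (S + q) := by linear_combination hrq - hSC
    have h3 : s * (S + q) ≤ c * (r + C) := by nlinarith
    have key : s * (r - C) * (r + C) ≤ c * (S - q) * (r + C) := by
      have h4 : s * ((S - q) * (S + q)) ≤ c * ((S - q) * (r + C)) := by nlinarith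
      calc s * (r - C) * (r + C) = s * ((S - q) * (S + q)) := by rw [mul_assoc, e]
      _ ≤ c * ((S - q) * (r + C)) := h4
      _ = c * (S - q) * (r + C) := by ring
    have h5 : s * (r - C) ≤ c * (S - q) := le_of_mul_le_mul_right (by linarith [key]) hpos
    nlinarith [h5]

lemma abs_cos_add_nat_mul_pi (x : ℝ) (m : ℕ) : |Real.cos (x + m * Real.pi)| = |Real.cos x| := by
  induction m with
  | zero => simp
  | succ m ih =>
    have : x + (m + 1 : ℕ) * Real.pi = (x + m * Real.pi) + Real.pi := by push_cast; ring
    rw [this, Real.cos_add_pi, abs_neg, ih]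

lemma pell_reduce {P Q : Polynomial ℂ} (h : PellPair P Q) {k : ℕ} (hdeg : P.natDegree = k + 1) :
    ∃ (P' Q' : Polynomial ℂ) (ω : ℂ),
      Complex.normSq ω = 1 ∧ PellPair P' Q' ∧ P'.natDegree ≤ k ∧
      (IsOddPoly P → IsEvenPoly P') ∧ (IsEvenPoly P → IsOddPoly P') ∧
      (∀ x : ℝ, P.eval (x:ℂ) = (x:ℂ) * P'.eval (x:ℂ) - ω * (1 - (x:ℂ)^2) * conj' (Q'.eval (x:ℂ))) ∧
      (∀ x : ℝ, Q.eval (x:ℂ) = (x:ℂ) * Q'.eval (x:ℂ) + ω * conj' (P'.eval (x:ℂ))) := by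
  have hP0 : P ≠ 0 := by
    intro h0; rw [h0, natDegree_zero] at hdeg; omega
  obtain ⟨hQ0, hQdeg', hlead⟩ := pell_degree h (by omega)
  have hQdeg : Q.natDegree = k := by omega
  have hpcoeff : P.coeff (k+1) = P.leadingCoeff := by rw [← hdeg, coeff_natDegree]
  have hqcoeff : Q.coeff k = Q.leadingCoeff := by rw [← hQdeg, coeff_natDegree]
  set p : ℂ := P.leadingCoeff with hp
  set q : ℂ := Q.leadingCoeff with hq
  have hp0 : p ≠ 0 := leadingCoeff_ne_zero.2 hP0
  have hq0 : q ≠ 0 := leadingCoeff_ne_zero.2 hQ0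
  have hqc0 : conj' q ≠ 0 := star_ne_zero.2 hq0
  set ω : ℂ := p / conj' q with hωdef
  have hnsq : Complex.normSq q = Complex.normSq p := by
    have h1 : ((Complex.normSq q : ℂ)) = ((Complex.normSq p : ℂ)) := by
      rw [← Complex.mul_conj, ← Complex.mul_conj]; exact hlead
    exact_mod_cast h1
  have hωn : Complex.normSq ω = 1 := by
    rw [hωdef, Complex.normSq_div, Complex.normSq_conj, hnsq, div_self]
    exact fun h0 => hp0 (Complex.normSq_eq_zero.1 h0)
  have hωconj : ω * conj' ω = 1 := by
    rw [Complex.mul_conj, hωn]; norm_num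
  -- parity bookkeeping
  have hPk : P.coeff k = 0 ∧ (1 ≤ k → Q.coeff (k-1) = 0) := by
    rcases h.1 with ⟨he, ho⟩ | ⟨ho, he⟩
    · have hk1 : Even (k+1) := by
        by_contra ho1
        exact hp0 (hpcoeff ▸ even_coeff he (Nat.not_even_iff_odd.1 ho1))
      have hk : Odd k := by rcases hk1 with ⟨t, ht⟩; exact ⟨t-1, by omega⟩
      refine ⟨even_coeff he hk, fun h1 => odd_coeff ho ?_⟩
      rcases hk with ⟨t, ht⟩; exact ⟨t, by omega⟩
    · have hk1 : Odd (k+1) := by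
        by_contra he1
        exact hp0 (hpcoeff ▸ odd_coeff ho (Nat.not_odd_iff_even.1 he1))
      have hk : Even k := by rcases hk1 with ⟨t, ht⟩; exact ⟨t, by omega⟩
      refine ⟨odd_coeff ho hk, fun h1 => even_coeff he ?_⟩
      rcases hk with ⟨t, ht⟩; exact ⟨t - 1, by omega⟩
  set P' : Polynomial ℂ := X * P + (1 - X^2) * (C ω * Q.map conj') with hP'def
  set Q' : Polynomial ℂ := X * Q - C ω * P.map conj' with hQ'def
  have evP' : ∀ z : ℂ, P'.eval z = z * P.eval z + (1 - z^2) * (ω * conj' (Q.eval (conj' z))) := by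
    intro z; simp [hP'def, evalc]
  have evQ' : ∀ z : ℂ, Q'.eval z = z * Q.eval z - ω * conj' (P.eval (conj' z)) := by
    intro z; simp [hQ'def, evalc]
  have evP'r : ∀ x : ℝ, P'.eval (x:ℂ) = (x:ℂ) * P.eval (x:ℂ) + (1 - (x:ℂ)^2) * (ω * conj' (Q.eval (x:ℂ))) := by
    intro x; rw [evP', Complex.conj_ofReal]
  have evQ'r : ∀ x : ℝ, Q'.eval (x:ℂ) = (x:ℂ) * Q.eval (x:ℂ) - ω * conj' (P.eval (x:ℂ)) := by
    intro x; rw [evQ', Complex.conj_ofReal]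
  -- Pell property of the reduced pair
  have hpell' : ∀ x : ℝ, x ∈ Set.Icc (-1 : ℝ) 1 →
      ‖P'.eval (x : ℂ)‖ ^ 2 + (1 - x ^ 2) * ‖Q'.eval (x : ℂ)‖ ^ 2 = 1 := by
    intro x hx
    have hbase := h.2 x hx
    rw [Complex.sq_norm, Complex.sq_norm] at hbase ⊢
    rw [evP'r, evQ'r, scalar_pell x _ _ ω hωn]
    exact hbase
  -- parity of the reduced pair
  have hparred : (IsEvenPoly P ∧ IsOddPoly Q → IsOddPoly P' ∧ IsEvenPoly Q')
      ∧ (IsOddPoly P ∧ IsEvenPoly Q → IsEvenPoly P' ∧ IsOddPoly Q') := by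
    constructor
    · rintro ⟨he, ho⟩
      constructor
      · intro z
        simp only [evP', map_neg]
        rw [he z, ho (conj' z)]
        simp only [map_neg]
        ring
      · intro z
        simp only [evQ', map_neg]
        rw [ho z, he (conj' z)]
        try simp only [map_neg]
        ring
    · rintro ⟨ho, he⟩
      constructor
      · intro z
        simp only [evP', map_neg]
        rw [ho z, he (conj' z)]
        try simp only [map_neg]
        ring
      · intro z
        simp only [evQ', map_neg]
        rw [he z, ho (conj' z)]
        try simp only [map_neg]
        ring
  -- degree bound
  have hcoeffP' : P'.natDegree ≤ k := by
    rw [natDegree_le_iff_coeff_eq_zero]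
    intro i hi
    obtain ⟨j, rfl⟩ : ∃ j, i = j + 1 := ⟨i - 1, by omega⟩
    have hsplit : P' = X * P + ((C ω * Q.map conj') - (C ω * Q.map conj') * X^2) := by
      rw [hP'def]; ring
    rw [hsplit, coeff_add, coeff_X_mul, coeff_sub, coeff_mul_X_pow']
    simp only [coeff_C_mul, coeff_map]
    rcases Nat.lt_trichotomy (j+1) (k+2) with hlt | heq | hgt
    · -- j = k
      rw [show j = k from by omega]
      have e1 : Q.coeff (k+1) = 0 := coeff_eq_zero_of_natDegree_lt (by omega)
      rcases Nat.eq_zero_or_pos k with hk0 | hk1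
      · subst hk0
        rw [if_neg (by omega), hPk.1, e1]
        simp
      · rw [if_pos (by omega), show k + 1 - 2 = k - 1 by omega, hPk.1, hPk.2 hk1, e1]
        simp
    · -- j = k + 1
      rw [show j = k + 1 from by omega]
      rw [if_pos (by omega)]
      have e1 : Q.coeff (k+2) = 0 := coeff_eq_zero_of_natDegree_lt (by omega)
      rw [hpcoeff, e1, show k + 2 - 2 = k by omega, hqcoeff, map_zero, mul_zero, zero_sub, hωdef]
      rw [div_mul_cancel₀ _ hqc0]
      ring
    · -- j ≥ k + 2
      have e1 : P.coeff j = 0 := coeff_eq_zero_of_natDegree_lt (by omega)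
      have e2 : Q.coeff (j+1) = 0 := coeff_eq_zero_of_natDegree_lt (by omega)
      rw [if_pos (by omega), e1, e2]
      have e3 : Q.coeff (j+1-2) = 0 := coeff_eq_zero_of_natDegree_lt (by omega)
      rw [e3]
      simp
  -- inversion identities
  have hinvP : ∀ x : ℝ, P.eval (x:ℂ) = (x:ℂ) * P'.eval (x:ℂ) - ω * (1 - (x:ℂ)^2) * conj' (Q'.eval (x:ℂ)) := by
    intro x
    rw [evP'r, evQ'r]
    simp only [map_sub, map_mul, Complex.conj_conj, Complex.conj_ofReal]
    linear_combination (-((1:ℂ) - (x:ℂ)^2) * P.eval (x:ℂ)) * hωconj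
  have hinvQ : ∀ x : ℝ, Q.eval (x:ℂ) = (x:ℂ) * Q'.eval (x:ℂ) + ω * conj' (P'.eval (x:ℂ)) := by
    intro x
    rw [evP'r, evQ'r]
    simp only [map_add, map_sub, map_mul, map_one, map_pow, Complex.conj_conj,
      Complex.conj_ofReal]
    linear_combination (-((1:ℂ) - (x:ℂ)^2) * Q.eval (x:ℂ)) * hωconj
  refine ⟨P', Q', ω, hωn, ⟨?_, hpell'⟩, hcoeffP', ?_, ?_, hinvP, hinvQ⟩
  · rcases h.1 with hpe | hpo
    · exact Or.inr (hparred.1 hpe)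
    · exact Or.inl (hparred.2 hpo)
  · intro hPodd
    rcases h.1 with hpe | hpo
    · exfalso
      apply hp0
      rw [← hpcoeff]
      by_cases hpar : Odd (k+1)
      · exact even_coeff hpe.1 hpar
      · exact odd_coeff hPodd (Nat.not_odd_iff_even.1 hpar)
    · exact (hparred.2 hpo).1
  · intro hPeven
    rcases h.1 with hpe | hpo
    · exact (hparred.1 hpe).1
    · exfalso
      apply hp0
      rw [← hpcoeff]
      by_cases hpar : Odd (k+1)
      · exact even_coeff hPeven hpar
      · exact odd_coeff hpo.1 (Nat.not_odd_iff_even.1 hpar)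

lemma pell_bound (k : ℕ) : ∀ (P Q : Polynomial ℂ), PellPair P Q → P.natDegree ≤ k →
    ∀ φ : ℝ, 0 ≤ φ → φ ≤ Real.pi / 2 → (k : ℝ) * φ ≤ Real.pi / 2 →
    (IsOddPoly P → ‖P.eval ((Real.sin φ : ℝ) : ℂ)‖ ≤ Real.sin (k * φ)) ∧
    (IsEvenPoly P → Real.cos φ * ‖Q.eval ((Real.sin φ : ℝ) : ℂ)‖ ≤ Real.sin (k * φ)) := by
  induction k with
  | zero =>
    intro P Q h hdeg φ hφ0 hφ2 _
    have hC := Polynomial.eq_C_of_natDegree_le_zero hdeg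
    have hamem : Real.sin φ ∈ Set.Icc (-1:ℝ) 1 :=
      ⟨by linarith [Real.neg_one_le_sin φ], Real.sin_le_one φ⟩
    constructor
    · intro hodd
      have h1 := hodd 0
      rw [neg_zero] at h1
      have h0 : P.eval 0 = 0 := by linear_combination h1 / 2
      rw [hC] at h0 ⊢
      simp only [eval_C] at h0 ⊢
      rw [h0]
      simp
    · intro _
      have h1 := h.2 1 (by norm_num)
      have ha := h.2 (Real.sin φ) hamem
      have hconst : ∀ x : ℝ, P.eval (x:ℂ) = P.coeff 0 := fun x => by rw [hC]; simp
      rw [hconst] at h1 ha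
      rw [show (1:ℝ) - 1^2 = 0 by norm_num, zero_mul, add_zero] at h1
      have h2 : (1 - Real.sin φ ^ 2) * ‖Q.eval ((Real.sin φ:ℝ):ℂ)‖ ^ 2 = 0 := by
        linarith
      have h3 : (Real.cos φ * ‖Q.eval ((Real.sin φ:ℝ):ℂ)‖) ^ 2 = 0 := by
        rw [mul_pow, Real.cos_sq']; exact h2
      have h4 := pow_eq_zero_iff (n := 2) (by norm_num) |>.1 h3
      rw [h4]
      simp
  | succ k ih =>
    intro P Q h hdeg φ hφ0 hφ2 hkφ
    have hkφ' : (k:ℝ) * φ ≤ Real.pi / 2 := by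
      push_cast at hkφ; nlinarith
    rcases le_or_gt P.natDegree k with hle | hgt
    · have IH := ih P Q h hle φ hφ0 hφ2 hkφ'
      have hmono : Real.sin ((k:ℝ) * φ) ≤ Real.sin (((k+1 : ℕ):ℝ) * φ) := by
        apply Real.sin_le_sin_of_le_of_le_pi_div_two
        · have h0 : (0:ℝ) ≤ (k:ℝ)*φ := by positivity
          linarith [Real.pi_pos]
        · push_cast at hkφ ⊢; linarith
        · push_cast; nlinarith
      exact ⟨fun ho => (IH.1 ho).trans (by exact_mod_cast hmono),
             fun he => (IH.2 he).trans (by exact_mod_cast hmono)⟩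
    · have hdeg' : P.natDegree = k + 1 := by omega
      obtain ⟨P', Q', ω, hωn, h', hdegP', hoddeven, hevenodd, hinvP, hinvQ⟩ := pell_reduce h hdeg'
      have IH := ih P' Q' h' hdegP' φ hφ0 hφ2 hkφ'
      set a : ℝ := Real.sin φ with hadef
      have ha1 : a ≤ 1 := Real.sin_le_one φ
      have ha0 : 0 ≤ a := Real.sin_nonneg_of_nonneg_of_le_pi hφ0 (by linarith [Real.pi_pos])
      have hamem : a ∈ Set.Icc (-1:ℝ) 1 := ⟨by linarith, ha1⟩
      have hpell := h'.2 a hamem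
      have habsω : ‖ω‖ = 1 := by rw [Complex.norm_def, hωn, Real.sqrt_one]
      have hcos0 : 0 ≤ Real.cos φ := Real.cos_nonneg_of_mem_Icc ⟨by linarith, hφ2⟩
      have hcossq : 1 - a^2 = Real.cos φ ^ 2 := (Real.cos_sq' φ).symm
      have hS0 : 0 ≤ Real.sin ((k:ℝ)*φ) :=
        Real.sin_nonneg_of_nonneg_of_le_pi (by positivity) (by linarith [Real.pi_pos])
      have hC0 : 0 ≤ Real.cos ((k:ℝ)*φ) := by
        apply Real.cos_nonneg_of_mem_Icc
        constructor
        · have : (0:ℝ) ≤ (k:ℝ)*φ := by positivity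
          linarith [Real.pi_pos]
        · exact hkφ'
      have hSC : Real.sin ((k:ℝ)*φ)^2 + Real.cos ((k:ℝ)*φ)^2 = 1 := Real.sin_sq_add_cos_sq _
      have hsc : Real.sin φ * Real.sin ((k:ℝ)*φ) ≤ Real.cos φ * Real.cos ((k:ℝ)*φ) := by
        have hnn : 0 ≤ Real.cos (φ + (k:ℝ)*φ) := by
          apply Real.cos_nonneg_of_mem_Icc
          constructor
          · have h1 : (0:ℝ) ≤ (k:ℝ)*φ := by positivity
            linarith [Real.pi_pos]
          · push_cast at hkφ; linarith
        rw [Real.cos_add] at hnn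
        linarith
      have hsin_add : Real.sin (((k+1:ℕ):ℝ) * φ)
          = Real.sin φ * Real.cos ((k:ℝ)*φ) + Real.cos φ * Real.sin ((k:ℝ)*φ) := by
        push_cast
        rw [show ((k:ℝ)+1)*φ = φ + (k:ℝ)*φ by ring, Real.sin_add]
      have tri : ∀ u v : ℂ, ‖u + v‖ ≤ ‖u‖ + ‖v‖ :=
        fun u v => norm_add_le u v
      have habs_aux : ∀ z : ℂ, ‖(a:ℂ) * z‖ = a * ‖z‖ := by
        intro z; rw [norm_mul, Complex.norm_real, Real.norm_eq_abs, _root_.abs_of_nonneg ha0]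
      constructor
      · intro hodd
        have hP'even : IsEvenPoly P' := hoddeven hodd
        have hQbound := IH.2 hP'even
        set r : ℝ := ‖P'.eval (a:ℂ)‖ with hrdef
        set qq : ℝ := Real.cos φ * ‖Q'.eval (a:ℂ)‖ with hqdef
        have hq2 : qq^2 = (1 - a^2) * ‖Q'.eval (a:ℂ)‖^2 := by
          rw [hqdef, mul_pow, ← hcossq]
        have hrq : r^2 + qq^2 = 1 := by rw [hq2, hrdef]; exact hpell
        have htri : ‖P.eval (a:ℂ)‖ ≤ a * r + Real.cos φ * qq := by
          rw [hinvP a, sub_eq_add_neg]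
          refine (tri _ _).trans ?_
          rw [norm_neg, habs_aux, norm_mul, norm_mul, habsω, Complex.norm_conj, one_mul]
          have hcast : ((1:ℂ) - (a:ℂ)^2) = ((1 - a^2 : ℝ) : ℂ) := by push_cast; ring
          rw [hcast, Complex.norm_real, Real.norm_eq_abs, _root_.abs_of_nonneg (by nlinarith : (0:ℝ) ≤ 1 - a^2)]
          have : (1 - a^2) * ‖Q'.eval (a:ℂ)‖ = Real.cos φ * qq := by
            rw [hqdef, hcossq]; ring
          rw [this, hrdef]
        refine htri.trans ?_
        rw [hsin_add]
        have := trig_key ha0 hcos0 hS0 hC0 (by rw [hrdef]; exact norm_nonneg _)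
          (by rw [hqdef]; positivity) hrq hSC hQbound hsc
        linarith
      · intro heven
        have hP'odd : IsOddPoly P' := hevenodd heven
        have hPbound := IH.1 hP'odd
        set r : ℝ := Real.cos φ * ‖Q'.eval (a:ℂ)‖ with hrdef
        set qq : ℝ := ‖P'.eval (a:ℂ)‖ with hqdef
        have hr2 : r^2 = (1 - a^2) * ‖Q'.eval (a:ℂ)‖^2 := by
          rw [hrdef, mul_pow, ← hcossq]
        have hrq : r^2 + qq^2 = 1 := by rw [hr2, hqdef]; linarith [hpell]
        have htri : Real.cos φ * ‖Q.eval (a:ℂ)‖ ≤ a * r + Real.cos φ * qq := by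
          rw [hinvQ a]
          have h1 : ‖(a:ℂ) * Q'.eval (a:ℂ) + ω * conj' (P'.eval (a:ℂ))‖
              ≤ a * ‖Q'.eval (a:ℂ)‖ + qq := by
            refine (tri _ _).trans ?_
            rw [habs_aux, norm_mul, habsω, Complex.norm_conj, one_mul, hqdef]
          calc Real.cos φ * ‖(a:ℂ) * Q'.eval (a:ℂ) + ω * conj' (P'.eval (a:ℂ))‖
              ≤ Real.cos φ * (a * ‖Q'.eval (a:ℂ)‖ + qq) :=
                mul_le_mul_of_nonneg_left h1 hcos0
            _ = a * r + Real.cos φ * qq := by rw [hrdef]; ring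
        refine htri.trans ?_
        rw [hsin_add]
        have := trig_key ha0 hcos0 hS0 hC0 (by rw [hrdef]; positivity)
          (by rw [hqdef]; exact norm_nonneg _) hrq hSC hPbound hsc
        linarith

theorem pellian_le_chebyshev_of_odd (P : Polynomial ℂ) (hP : Pellian P)
    (d : ℕ) (hdeg : P.natDegree = d) (hodd : Odd d)
    (a : ℝ) (ha : a ∈ Set.Icc (0 : ℝ) 1) (ha' : a ≤ Real.sin (Real.pi / (2 * d))) :
    ‖P.eval (a : ℂ)‖ ≤ |(Polynomial.Chebyshev.T ℝ d).eval a| := by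
  obtain ⟨Q, hPQ⟩ := hP
  obtain ⟨m, hm⟩ := hodd
  have hd1 : 1 ≤ d := by omega
  have hP0 : P ≠ 0 := by
    intro h0; rw [h0, natDegree_zero] at hdeg; omega
  have hPodd : IsOddPoly P := by
    rcases hPQ.1 with ⟨he, _⟩ | ⟨ho, _⟩
    · exfalso
      have h0 := even_coeff he (show Odd d from ⟨m, by omega⟩)
      rw [← hdeg, coeff_natDegree] at h0
      exact leadingCoeff_ne_zero.2 hP0 h0
    · exact ho
  set φ : ℝ := Real.arcsin a with hφdef
  have hφ0 : 0 ≤ φ := Real.arcsin_nonneg.2 ha.1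
  have hφ2 : φ ≤ Real.pi / 2 := Real.arcsin_le_pi_div_two a
  have hsin : Real.sin φ = a := Real.sin_arcsin (by linarith [ha.1]) ha.2
  have hdr : (d:ℝ) = 2*(m:ℝ)+1 := by exact_mod_cast hm
  have hd0 : (0:ℝ) < (d:ℝ) := by exact_mod_cast Nat.pos_of_ne_zero (by omega)
  have h2d : (2:ℝ) ≤ 2*(d:ℝ) := by nlinarith
  have hq2dpos : 0 < Real.pi/(2*(d:ℝ)) := by positivity
  have hq2d : Real.pi/(2*(d:ℝ)) ≤ Real.pi/2 := by
    rw [div_le_div_iff₀ (by positivity) (by norm_num)]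
    nlinarith [Real.pi_pos]
  have hφle : φ ≤ Real.pi/(2*(d:ℝ)) := by
    rw [hφdef]
    exact (Real.arcsin_le_iff_le_sin ⟨by linarith [ha.1], ha.2⟩
      ⟨by linarith [Real.pi_pos], hq2d⟩).2 ha'
  have hdφ : (d:ℝ)*φ ≤ Real.pi/2 := by
    have h1 : (d:ℝ)*φ ≤ (d:ℝ)*(Real.pi/(2*(d:ℝ))) :=
      mul_le_mul_of_nonneg_left hφle hd0.le
    have h2 : (d:ℝ)*(Real.pi/(2*(d:ℝ))) = Real.pi/2 := by
      field_simp
    linarith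
  have hkey := (pell_bound d P Q hPQ (le_of_eq hdeg) φ hφ0 hφ2 hdφ).1 hPodd
  rw [hsin] at hkey
  have hsindφ : 0 ≤ Real.sin ((d:ℝ)*φ) := by
    apply Real.sin_nonneg_of_nonneg_of_le_pi
    · positivity
    · linarith [Real.pi_pos]
  have hTd : |(Polynomial.Chebyshev.T ℝ d).eval a| = Real.sin ((d:ℝ)*φ) := by
    have hacos : a = Real.cos (Real.pi/2 - φ) := by rw [Real.cos_pi_div_two_sub, hsin]
    rw [hacos, Polynomial.Chebyshev.T_real_cos]
    have harg : ((d:ℤ):ℝ) * (Real.pi/2 - φ) = (Real.pi/2 - (d:ℝ)*φ) + (m:ℝ) * Real.pi := by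
      push_cast
      rw [hdr]
      ring
    rw [harg, abs_cos_add_nat_mul_pi, Real.cos_pi_div_two_sub,
      _root_.abs_of_nonneg hsindφ]
  rw [hTd]
  exact hkey
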